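/- For any real numbers G_1, …, G_T and the dual iterates λ_1 = 0, λ_{t+1} = max(0, (a_{t+1}/2) ∑_{i=1}^t G_i) (the maximizer of −λ²/a_{t+1} + λ ∑_{i=1}^t G_i over λ ≥ 0), the following holds for every λ ≥ 0: −∑_{t=1}^T λ_t G_t + λ ∑_{t=1}^T G_t ≤ λ²/a_T + (1/2) ∑_{t=1}^T a_t G_t². -/

import Mathlib

open Finset

set_option maxHeartbeats 1000000 in
/-- **Dual FTRL (dual averaging) bound.** For real numbers `G_1, …, G_T`, step
sizes `a_t = a t^{−β}` with `a > 0`, `β ∈ [0,1)`, and dual iterates `λ_1 = 0`,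
`λ_{t+1} = max(0, (a_{t+1}/2) ∑_{i=1}^t G_i)` (the maximizer of
`−λ²/a_{t+1} + λ ∑_{i=1}^t G_i` over `λ ≥ 0`), every `λ ≥ 0` satisfies
`−∑_{t=1}^T λ_t G_t + λ ∑_{t=1}^T G_t ≤ λ²/a_T + (1/2) ∑_{t=1}^T a_t G_t²`. -/
theorem dual_ftrl_regret (T : ℕ) (hT : 1 ≤ T)
    (a β : ℝ) (ha : 0 < a) (hβ : β ∈ Set.Ico (0 : ℝ) 1)
    (aseq : ℕ → ℝ) (haseq : ∀ t, aseq t = a * (t : ℝ) ^ (-β))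
    (G : ℕ → ℝ)
    (lam : ℕ → ℝ) (hlam1 : lam 1 = 0)
    (hlam : ∀ t, 1 ≤ t →
      lam (t + 1) = max 0 (aseq (t + 1) / 2 * ∑ i ∈ Finset.Icc 1 t, G i)) :
    ∀ l : ℝ, 0 ≤ l →
      (-∑ t ∈ Finset.Icc 1 T, lam t * G t) + l * ∑ t ∈ Finset.Icc 1 T, G t
        ≤ l ^ 2 / aseq T + 1 / 2 * ∑ t ∈ Finset.Icc 1 T, aseq t * G t ^ 2 := by
  intro l hl
  obtain ⟨hβ0, hβ1⟩ := hβ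
  have hapos : ∀ t : ℕ, 1 ≤ t → 0 < aseq t := by
    intro t ht
    rw [haseq]
    have ht' : (0 : ℝ) < (t : ℝ) := by exact_mod_cast ht
    exact mul_pos ha (Real.rpow_pos_of_pos ht' _)
  have hadec : ∀ t : ℕ, 1 ≤ t → aseq (t + 1) ≤ aseq t := by
    intro t ht
    rw [haseq, haseq]
    have ht' : (0 : ℝ) < (t : ℝ) := by exact_mod_cast ht
    have hle : (t : ℝ) ≤ ((t + 1 : ℕ) : ℝ) := by push_cast; linarith
    exact mul_le_mul_of_nonneg_left
      (Real.rpow_le_rpow_of_nonpos ht' hle (by linarith)) ha.le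
  set S : ℕ → ℝ := fun t => ∑ i ∈ Finset.Icc 1 t, G i with hS
  set M : ℕ → ℝ := fun t => aseq t * (max 0 (S t)) ^ 2 / 4 with hM
  have key : ∀ t, 1 ≤ t →
      M t - 1 / 2 * ∑ i ∈ Finset.Icc 1 t, aseq i * G i ^ 2
        ≤ ∑ i ∈ Finset.Icc 1 t, lam i * G i := by
    intro t ht
    induction t with
    | zero => omega
    | succ n ih =>
      rcases Nat.lt_or_ge 1 (n + 1) with h | h
      · -- inductive step, n ≥ 1
        have hn : 1 ≤ n := by omega
        have ihn := ih hn
        rw [Finset.sum_Icc_succ_top (by omega : 1 ≤ n + 1),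
          Finset.sum_Icc_succ_top (by omega : 1 ≤ n + 1)]
        have hSsucc : S (n + 1) = S n + G (n + 1) := by
          simp only [hS]
          rw [Finset.sum_Icc_succ_top (by omega : 1 ≤ n + 1)]
        have hlamv : lam (n + 1) = max 0 (aseq (n + 1) / 2 * S n) := hlam n hn
        set b := aseq (n + 1) with hb
        have hbpos : 0 < b := hapos (n + 1) (by omega)
        set s := S n with hs
        set g := G (n + 1) with hg
        -- M n ≥ b * (max 0 s)^2 / 4
        have hMn : b * (max 0 s) ^ 2 / 4 ≤ M n := by
          simp only [hM]
          have := hadec n hn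
          have : b ≤ aseq n := this
          nlinarith [sq_nonneg (max 0 s)]
        have hMsucc : M (n + 1) = b * (max 0 (s + g)) ^ 2 / 4 := by
          simp only [hM, hSsucc]
          rfl
        have hstep : M (n + 1) - M n - b * g ^ 2 / 2 ≤ lam (n + 1) * g := by
          rw [hMsucc, hlamv]
          have hmax : max 0 (b / 2 * s) = b / 2 * max 0 s := by
            rcases le_total s 0 with hs0 | hs0
            · rw [max_eq_left (by nlinarith), max_eq_left hs0, mul_zero]
            · rw [max_eq_right (by nlinarith), max_eq_right hs0]
          rw [hmax]
          have hkey : (max 0 (s + g)) ^ 2 ≤ (max 0 s) ^ 2 + 2 * (max 0 s) * g + 2 * g ^ 2 := by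
            rcases le_total (s + g) 0 with hsg | hsg
            · rw [max_eq_left hsg]
              rcases le_total s 0 with hs0 | hs0
              · rw [max_eq_left hs0]; nlinarith [sq_nonneg (s + g), sq_nonneg g]
              · rw [max_eq_right hs0]; nlinarith [sq_nonneg (s + g), sq_nonneg g]
            · rw [max_eq_right hsg]
              rcases le_total s 0 with hs0 | hs0
              · rw [max_eq_left hs0]
                nlinarith [mul_nonneg (neg_nonneg.mpr hs0) hsg, sq_nonneg s, sq_nonneg g]
              · rw [max_eq_right hs0]; nlinarith [sq_nonneg g]
          have hmul := mul_le_mul_of_nonneg_left hkey hbpos.le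
          linarith
        have haG : aseq (n + 1) * G (n + 1) ^ 2 = b * g ^ 2 := rfl
        linarith [hstep, ihn]
      · -- base case n + 1 = 1, i.e. n = 0
        have hn0 : n = 0 := by omega
        subst hn0
        have h1 : S 1 = G 1 := by simp [hS]
        have hM1 : M 1 = aseq 1 * (max 0 (G 1)) ^ 2 / 4 := by rw [hM]; simp [h1]
        have ha1 : 0 < aseq 1 := hapos 1 le_rfl
        simp only [Finset.Icc_self, Finset.sum_singleton, hlam1, zero_mul]
        rw [hM1]
        have : (max 0 (G 1)) ^ 2 ≤ G 1 ^ 2 := by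
          rcases le_total (G 1) 0 with h0 | h0
          · rw [max_eq_left h0]; nlinarith [sq_nonneg (G 1)]
          · rw [max_eq_right h0]
        nlinarith
  have hkeyT := key T hT
  have hA : 0 < aseq T := hapos T hT
  set p := max 0 (S T) with hp
  have hSp : S T ≤ p := le_max_right _ _
  have h1 : l * S T ≤ l * p := mul_le_mul_of_nonneg_left hSp hl
  have h2 : l * p - aseq T * p ^ 2 / 4 ≤ l ^ 2 / aseq T := by
    rw [le_div_iff₀ hA]
    nlinarith [sq_nonneg (2 * l - aseq T * p)]
  have hMT : M T = aseq T * p ^ 2 / 4 := by rw [hM]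
  linarith [hkeyT, h1, h2]
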